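/- Let K ⊆ N be submodules of M with N proper. If K is a weakly classical 1-absorbing prime submodule of M and N/K is a weakly classical 1-absorbing prime submodule of the quotient module M/K, then N is a weakly classical 1-absorbing prime submodule of M. -/
import Mathlib


/-- A proper submodule `N` of `M` is weakly classical 1-absorbing prime if whenever
`abcm ∈ N` and `abcm ≠ 0` for nonunits `a, b, c ∈ R` and `m ∈ M`, then `abm ∈ N` or `cm ∈ N`. -/
def IsWeaklyClassical1AbsorbingPrime {R : Type*} [CommRing R] {M : Type*} [AddCommGroup M]
    [Module R M] (N : Submodule R M) : Prop :=
  N ≠ ⊤ ∧ ∀ a b c : R, ∀ m : M, ¬ IsUnit a → ¬ IsUnit b → ¬ IsUnit c →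
    (a * b * c) • m ∈ N → (a * b * c) • m ≠ 0 → ((a * b) • m ∈ N ∨ c • m ∈ N)

/-- A proper ideal `I` of `R` is weakly 1-absorbing prime if whenever `abc ∈ I` and
`abc ≠ 0` for nonunits `a, b, c ∈ R`, then `ab ∈ I` or `c ∈ I`. -/
def IsWeakly1AbsorbingPrimeIdeal {R : Type*} [CommRing R] (I : Ideal R) : Prop :=
  I ≠ ⊤ ∧ ∀ a b c : R, ¬ IsUnit a → ¬ IsUnit b → ¬ IsUnit c →
    a * b * c ∈ I → a * b * c ≠ 0 → (a * b ∈ I ∨ c ∈ I)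

/-- If `K ⊆ N` are submodules of `M` with `N` proper, `K` is weakly
classical 1-absorbing prime in `M` and `N/K` is weakly classical 1-absorbing prime in
`M/K`, then `N` is weakly classical 1-absorbing prime in `M`. -/
theorem stmt_5 {R : Type*} [CommRing R] [Nontrivial R] {M : Type*} [AddCommGroup M]
    [Module R M] [Nontrivial M] (K N : Submodule R M) (hKN : K ≤ N) (hN : N ≠ ⊤)
    (hK : IsWeaklyClassical1AbsorbingPrime K)
    (hNK : IsWeaklyClassical1AbsorbingPrime (Submodule.map K.mkQ N)) :
    IsWeaklyClassical1AbsorbingPrime N := by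
  refine ⟨hN, fun a b c m ha hb hc hmem hne => ?_⟩
  by_cases hKc : (a * b * c) • m ∈ K
  · rcases hK.2 a b c m ha hb hc hKc hne with h | h
    · exact Or.inl (hKN h)
    · exact Or.inr (hKN h)
  · have hmemQ : (a * b * c) • (K.mkQ m) ∈ Submodule.map K.mkQ N :=
      ⟨(a * b * c) • m, hmem, by simp⟩
    have hneQ : (a * b * c) • (K.mkQ m) ≠ 0 := by
      intro h
      exact hKc (by rwa [← map_smul, K.mkQ_apply, Submodule.Quotient.mk_eq_zero] at h)
    rcases hNK.2 a b c (K.mkQ m) ha hb hc hmemQ hneQ with h | h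
    · left
      rw [← map_smul] at h
      rcases h with ⟨n, hn, hn'⟩
      have : (a * b) • m - n ∈ K := by
        rw [← Submodule.ker_mkQ K, LinearMap.mem_ker, map_sub, hn', sub_self]
      have := hKN this
      have := N.add_mem this hn
      simpa using this
    · right
      rw [← map_smul] at h
      rcases h with ⟨n, hn, hn'⟩
      have : c • m - n ∈ K := by
        rw [← Submodule.ker_mkQ K, LinearMap.mem_ker, map_sub, hn', sub_self]
      have := hKN this
      have := N.add_mem this hn
      simpa using this
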